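/- (Golub–Van Loan norm bounds on the TLS solution) If σ̂_{n_x}⁺ > σ̂_{n_x+1} and δ̂ = σ̂_{n_x}⁺ - σ̂_{n_x+1}, then ‖Ĥ⁻ v̂_{n_x}‖ / (2δ̂) ≤ ‖â_tls‖ ≤ ‖Ĥ⁻‖ / δ̂, where v̂_{n_x} is the right singular vector of Ĥ⁺ corresponding to its smallest singular value. -/
import Mathlib

open Matrix

/-- The Euclidean norm of a finite real vector. -/
noncomputable def euclNorm {k : ℕ} (x : Fin k → ℝ) : ℝ := Real.sqrt (∑ i, x i ^ 2)

/-- The smallest singular value of a (wide) matrix `M : r × c` with `r ≤ c`, characterized as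
the infimum of `‖xᵀM‖` over unit vectors `x`. -/
noncomputable def sminSV {r c : ℕ} (M : Matrix (Fin r) (Fin c) ℝ) : ℝ :=
  sInf {t | ∃ x : Fin r → ℝ, euclNorm x = 1 ∧ t = euclNorm (x ᵥ* M)}

lemma euclNorm_nonneg {k : ℕ} (x : Fin k → ℝ) : 0 ≤ euclNorm x := Real.sqrt_nonneg _

lemma euclNorm_sq {k : ℕ} (x : Fin k → ℝ) : euclNorm x ^ 2 = ∑ i, x i ^ 2 :=
  Real.sq_sqrt (Finset.sum_nonneg fun i _ => sq_nonneg _)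

lemma dot_le_norm {k : ℕ} (x y : Fin k → ℝ) : ∑ i, x i * y i ≤ euclNorm x * euclNorm y :=
  Real.sum_mul_le_sqrt_mul_sqrt _ _ _

lemma euclNorm_neg {k : ℕ} (x : Fin k → ℝ) : euclNorm (fun i => -(x i)) = euclNorm x := by
  simp [euclNorm]

lemma abs_dot_le_norm {k : ℕ} (x y : Fin k → ℝ) :
    |∑ i, x i * y i| ≤ euclNorm x * euclNorm y := by
  rw [abs_le]
  constructor
  · have h := dot_le_norm (fun i => -(x i)) y
    rw [euclNorm_neg] at h
    simp only [neg_mul] at h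
    rw [Finset.sum_neg_distrib] at h
    linarith
  · exact dot_le_norm x y

lemma euclNorm_smul {k : ℕ} (c : ℝ) (x : Fin k → ℝ) :
    euclNorm (c • x) = |c| * euclNorm x := by
  unfold euclNorm
  simp_rw [Pi.smul_apply, smul_eq_mul, mul_pow, ← Finset.mul_sum,
    Real.sqrt_mul (sq_nonneg c), Real.sqrt_sq_eq_abs]

lemma sminSV_nonneg {r c : ℕ} (M : Matrix (Fin r) (Fin c) ℝ) : 0 ≤ sminSV M :=
  Real.sInf_nonneg (by rintro t ⟨x, hx, rfl⟩; exact euclNorm_nonneg _)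

lemma sminSV_mul_le {r c : ℕ} (M : Matrix (Fin r) (Fin c) ℝ) (x : Fin r → ℝ) :
    sminSV M * euclNorm x ≤ euclNorm (x ᵥ* M) := by
  rcases eq_or_lt_of_le (euclNorm_nonneg x) with h | h
  · rw [← h, mul_zero]; exact euclNorm_nonneg _
  · have hx : euclNorm ((euclNorm x)⁻¹ • x) = 1 := by
      rw [euclNorm_smul, abs_of_pos (inv_pos.2 h), inv_mul_cancel₀ h.ne']
    have hb : BddBelow {t | ∃ y : Fin r → ℝ, euclNorm y = 1 ∧ t = euclNorm (y ᵥ* M)} :=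
      ⟨0, by rintro t ⟨y, hy, rfl⟩; exact euclNorm_nonneg _⟩
    have hle : sminSV M ≤ euclNorm (((euclNorm x)⁻¹ • x) ᵥ* M) :=
      csInf_le hb ⟨_, hx, rfl⟩
    rw [Matrix.smul_vecMul, euclNorm_smul, abs_of_pos (inv_pos.2 h)] at hle
    calc sminSV M * euclNorm x ≤ ((euclNorm x)⁻¹ * euclNorm (x ᵥ* M)) * euclNorm x :=
          mul_le_mul_of_nonneg_right hle h.le
      _ = euclNorm (x ᵥ* M) := by field_simp

set_option maxHeartbeats 1000000 in
/-- Golub–Van Loan norm bounds on the TLS solution: if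
`σ̂⁺_{n_x} > σ̂_{n_x+1}` and `δ̂ = σ̂⁺_{n_x} - σ̂_{n_x+1}`, then
`‖Ĥ⁻ v̂_{n_x}‖/(2δ̂) ≤ ‖â_tls‖ ≤ ‖Ĥ⁻‖/δ̂`, where `v̂_{n_x}` is the right singular vector of
`Ĥ⁺` corresponding to its smallest singular value. -/
theorem golub_van_loan_tls_norm_bounds
    (nx p : ℕ)
    (Hp : Matrix (Fin nx) (Fin (p + 1)) ℝ)
    (Hm : Matrix (Fin 1) (Fin (p + 1)) ℝ)
    (H : Matrix (Fin (nx + 1)) (Fin (p + 1)) ℝ)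
    (hH : ∀ (i : Fin (nx + 1)) (j : Fin (p + 1)),
      H i j = if h : (i : ℕ) < nx then Hp ⟨i, h⟩ j else Hm 0 j)
    (σp σ : ℝ) (hσp : σp = sminSV Hp) (hσ : σ = sminSV H)
    (hgap : σ < σp)
    -- (u, v) is a singular pair of Ĥ⁺ for its smallest singular value σ̂⁺_{n_x}
    (u : Fin nx → ℝ) (v : Fin (p + 1) → ℝ)
    (hu_unit : euclNorm u = 1) (hv_unit : euclNorm v = 1)
    (hpair1 : Hp *ᵥ v = σp • u) (hpair2 : u ᵥ* Hp = σp • v)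
    (atls : Matrix (Fin 1) (Fin nx) ℝ)
    (htls : atls = -(Hm * Hpᵀ * (Hp * Hpᵀ - σ ^ 2 • (1 : Matrix (Fin nx) (Fin nx) ℝ))⁻¹)) :
    |∑ j, Hm 0 j * v j| / (2 * (σp - σ)) ≤ euclNorm (fun j => atls 0 j) ∧
    euclNorm (fun j => atls 0 j) ≤ euclNorm (fun j => Hm 0 j) / (σp - σ) := by
  have hσ0 : 0 ≤ σ := hσ ▸ sminSV_nonneg H
  have hσp_pos : 0 < σp := lt_of_le_of_lt hσ0 hgap
  have hδ : 0 < σp - σ := sub_pos.2 hgap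
  have hs2 : 0 < σp ^ 2 - σ ^ 2 := by nlinarith
  set M : Matrix (Fin nx) (Fin nx) ℝ :=
    Hp * Hpᵀ - σ ^ 2 • (1 : Matrix (Fin nx) (Fin nx) ℝ) with hM
  -- smallest singular value quadratic bound
  have key : ∀ x : Fin nx → ℝ, σp ^ 2 * (∑ i, x i ^ 2) ≤ ∑ i, (x ᵥ* Hp) i ^ 2 := by
    intro x
    have h1 : σp * euclNorm x ≤ euclNorm (x ᵥ* Hp) := hσp ▸ sminSV_mul_le Hp x
    have h2 : 0 ≤ σp * euclNorm x := mul_nonneg hσp_pos.le (euclNorm_nonneg x)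
    calc σp ^ 2 * ∑ i, x i ^ 2 = (σp * euclNorm x) ^ 2 := by rw [mul_pow, euclNorm_sq]
      _ ≤ euclNorm (x ᵥ* Hp) ^ 2 := by nlinarith [euclNorm_nonneg (x ᵥ* Hp)]
      _ = ∑ i, (x ᵥ* Hp) i ^ 2 := euclNorm_sq _
  -- quadratic form of M
  have hdotM : ∀ x : Fin nx → ℝ,
      x ⬝ᵥ (M *ᵥ x) = (∑ i, (x ᵥ* Hp) i ^ 2) - σ ^ 2 * ∑ i, x i ^ 2 := by
    intro x
    rw [hM, Matrix.sub_mulVec, dotProduct_sub, Matrix.smul_mulVec,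
      Matrix.one_mulVec, dotProduct_smul, ← Matrix.mulVec_mulVec,
      Matrix.dotProduct_mulVec, Matrix.mulVec_transpose]
    simp [dotProduct, pow_two, smul_eq_mul, Finset.mul_sum]
  have hdet : IsUnit M.det := by
    rw [isUnit_iff_ne_zero]
    intro hdet0
    obtain ⟨x, hx0, hxM⟩ := (Matrix.exists_mulVec_eq_zero_iff).2 hdet0
    have h0 : x ⬝ᵥ (M *ᵥ x) = 0 := by rw [hxM, dotProduct_zero]
    have hxpos : 0 < ∑ i, x i ^ 2 := by
      rcases (Finset.sum_nonneg fun i _ => sq_nonneg (x i)).lt_or_eq with h | h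
      · exact h
      · exfalso
        apply hx0
        funext i
        have := (Finset.sum_eq_zero_iff_of_nonneg
          (fun i _ => sq_nonneg (x i))).1 h.symm i (Finset.mem_univ i)
        exact pow_eq_zero_iff (n := 2) (by norm_num) |>.1 this
    nlinarith [key x, hdotM x, h0]
  have hMMinv : M * M⁻¹ = 1 := Matrix.mul_nonsing_inv M hdet
  have hMinvM : M⁻¹ * M = 1 := Matrix.nonsing_inv_mul M hdet
  have hMsymm : Mᵀ = M := by
    rw [hM]
    simp [Matrix.transpose_sub, Matrix.transpose_mul, Matrix.transpose_smul,
      Matrix.transpose_one]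
  have hMinvsymm : M⁻¹ᵀ = M⁻¹ := by rw [Matrix.transpose_nonsing_inv, hMsymm]
  set h : Fin (p + 1) → ℝ := fun j => Hm 0 j with hh
  set z : Fin nx → ℝ := M⁻¹ *ᵥ (Hp *ᵥ h) with hz
  have hsym2 : ∀ a b, M⁻¹ a b = M⁻¹ b a := by
    intro a b
    conv_lhs => rw [← hMinvsymm]
    rw [Matrix.transpose_apply]
  have hatls : ∀ j, atls 0 j = -(z j) := by
    intro j
    rw [htls]
    simp only [Matrix.neg_apply, neg_inj]
    rw [hz]
    simp only [Matrix.mul_apply, Matrix.mulVec, dotProduct,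
      Matrix.transpose_apply]
    simp only [hh]
    apply Finset.sum_congr rfl
    intro k _
    rw [hsym2 k j, Finset.sum_mul, Finset.mul_sum]
    exact Finset.sum_congr rfl fun l _ => by ring
  have hnorm_eq : euclNorm (fun j => atls 0 j) = euclNorm z := by
    rw [show (fun j => atls 0 j) = (fun j => -(z j)) from funext hatls]
    exact euclNorm_neg z
  -- ===== lower bound =====
  have hHptu : Hpᵀ *ᵥ u = σp • v := by rw [Matrix.mulVec_transpose, hpair2]
  have hMu : M *ᵥ u = (σp ^ 2 - σ ^ 2) • u := by
    rw [hM, Matrix.sub_mulVec, Matrix.smul_mulVec, Matrix.one_mulVec,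
      ← Matrix.mulVec_mulVec, hHptu, Matrix.mulVec_smul, hpair1, smul_smul,
      sub_smul]
    rw [show σp ^ 2 = σp * σp from sq σp]
  have hMinvu : M⁻¹ *ᵥ u = (σp ^ 2 - σ ^ 2)⁻¹ • u := by
    have h1 : M⁻¹ *ᵥ (M *ᵥ u) = u := by
      rw [Matrix.mulVec_mulVec, hMinvM, Matrix.one_mulVec]
    rw [hMu, Matrix.mulVec_smul] at h1
    calc M⁻¹ *ᵥ u = (σp ^ 2 - σ ^ 2)⁻¹ • ((σp ^ 2 - σ ^ 2) • (M⁻¹ *ᵥ u)) := by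
          rw [smul_smul, inv_mul_cancel₀ hs2.ne', one_smul]
      _ = (σp ^ 2 - σ ^ 2)⁻¹ • u := by rw [h1]
  have hzu : ∑ i, z i * u i = (σp ^ 2 - σ ^ 2)⁻¹ * (σp * ∑ j, h j * v j) := by
    have e1 : ∑ i, z i * u i = u ⬝ᵥ z := by
      rw [dotProduct_comm]; rfl
    rw [e1, hz, Matrix.dotProduct_mulVec, ← Matrix.mulVec_transpose, hMinvsymm,
      hMinvu, smul_dotProduct, Matrix.dotProduct_mulVec, hpair2,
      smul_dotProduct]
    simp only [smul_eq_mul]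
    congr 2
    exact Finset.sum_congr rfl fun j _ => mul_comm _ _
  have hCS1 : |∑ i, z i * u i| ≤ euclNorm z := by
    have := abs_dot_le_norm z u
    rwa [hu_unit, mul_one] at this
  have hlow : |∑ j, Hm 0 j * v j| / (2 * (σp - σ)) ≤ euclNorm z := by
    have hS : (∑ j, Hm 0 j * v j) = ∑ j, h j * v j := rfl
    rw [hS, div_le_iff₀ (by positivity)]
    have habs : |(σp ^ 2 - σ ^ 2)⁻¹ * (σp * ∑ j, h j * v j)| =
        (σp ^ 2 - σ ^ 2)⁻¹ * (σp * |∑ j, h j * v j|) := by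
      rw [abs_mul, abs_mul, abs_of_pos (inv_pos.2 hs2), abs_of_pos hσp_pos]
    rw [hzu, habs] at hCS1
    have h2 := mul_le_mul_of_nonneg_right hCS1 hs2.le
    have h3 : (σp ^ 2 - σ ^ 2)⁻¹ * (σp * |∑ j, h j * v j|) * (σp ^ 2 - σ ^ 2)
        = σp * |∑ j, h j * v j| := by field_simp
    rw [h3] at h2
    nlinarith [abs_nonneg (∑ j, h j * v j), euclNorm_nonneg z,
      mul_nonneg (euclNorm_nonneg z) hδ.le]
  -- ===== upper bound =====
  set w : Fin nx → ℝ := M⁻¹ *ᵥ z with hw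
  have hMw : M *ᵥ w = z := by
    rw [hw, Matrix.mulVec_mulVec, hMMinv, Matrix.one_mulVec]
  set y : Fin (p + 1) → ℝ := Hpᵀ *ᵥ w with hy
  set s : Fin nx → ℝ := (Hp * Hpᵀ) *ᵥ w with hs
  have hzsw : ∀ i, z i = s i - σ ^ 2 * w i := by
    intro i
    rw [← hMw, hM, Matrix.sub_mulVec, Matrix.smul_mulVec, Matrix.one_mulVec]
    simp [hs, smul_eq_mul]
  have f1 : ∑ i, y i ^ 2 = ∑ i, w i * s i := by
    have e1 : ∑ i, y i ^ 2 = (w ᵥ* Hp) ⬝ᵥ (Hpᵀ *ᵥ w) := by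
      rw [← Matrix.mulVec_transpose]
      simp [dotProduct, hy, pow_two]
    rw [e1, ← Matrix.dotProduct_mulVec, Matrix.mulVec_mulVec]
    rfl
  have f2 : σp ^ 2 * ∑ i, w i ^ 2 ≤ ∑ i, w i * s i := by
    rw [← f1]
    have hwy : w ᵥ* Hp = y := by rw [hy, Matrix.mulVec_transpose]
    have := key w
    rwa [hwy] at this
  have hwy : w ᵥ* Hp = y := by rw [hy, Matrix.mulVec_transpose]
  have hRnn : (0:ℝ) ≤ ∑ i, w i ^ 2 := Finset.sum_nonneg fun i _ => sq_nonneg _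
  have f3 : 0 ≤ (∑ i, s i ^ 2) - 2 * σp ^ 2 * (∑ i, w i * s i)
      + σp ^ 4 * ∑ i, w i ^ 2 := by
    have h0 : (0:ℝ) ≤ ∑ i, (s i - σp ^ 2 * w i) ^ 2 :=
      Finset.sum_nonneg fun i _ => sq_nonneg _
    have hexp : ∑ i, (s i - σp ^ 2 * w i) ^ 2
        = (∑ i, s i ^ 2) - 2 * σp ^ 2 * (∑ i, w i * s i) + σp ^ 4 * ∑ i, w i ^ 2 := by
      rw [Finset.mul_sum, Finset.mul_sum, ← Finset.sum_sub_distrib,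
        ← Finset.sum_add_distrib]
      exact Finset.sum_congr rfl fun i _ => by ring
    linarith [hexp ▸ h0]
  have f4 : ∑ i, z i ^ 2 = (∑ i, s i ^ 2) - 2 * σ ^ 2 * (∑ i, w i * s i)
      + σ ^ 4 * ∑ i, w i ^ 2 := by
    rw [Finset.mul_sum, Finset.mul_sum, ← Finset.sum_sub_distrib,
      ← Finset.sum_add_distrib]
    exact Finset.sum_congr rfl fun i _ => by rw [hzsw i]; ring
  have fmain : (σp - σ) ^ 2 * (∑ i, w i * s i) ≤ ∑ i, z i ^ 2 := by
    have t2 : 0 ≤ ((σp - σ) * (σp + 3 * σ)) * ((∑ i, w i * s i) - σp ^ 2 * ∑ i, w i ^ 2) :=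
      mul_nonneg (mul_nonneg hδ.le (by linarith)) (by linarith [f2])
    have t3 : 0 ≤ ((σp - σ) ^ 2 * σ * (2 * σp + σ)) * ∑ i, w i ^ 2 :=
      mul_nonneg (mul_nonneg (mul_nonneg (sq_nonneg _) hσ0) (by linarith)) hRnn
    rw [f4]
    linarith [f3, t2, t3]
  have stepA : ∑ i, z i ^ 2 = ∑ j, y j * h j := by
    have e1 : ∑ i, z i ^ 2 = z ⬝ᵥ z := by simp [dotProduct, pow_two]
    have e2 : z ᵥ* M⁻¹ = w := by rw [← Matrix.mulVec_transpose, hMinvsymm, hw]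
    rw [e1]
    calc z ⬝ᵥ z = z ⬝ᵥ (M⁻¹ *ᵥ (Hp *ᵥ h)) := by rw [← hz]
      _ = (z ᵥ* M⁻¹) ⬝ᵥ (Hp *ᵥ h) := Matrix.dotProduct_mulVec _ _ _
      _ = w ⬝ᵥ (Hp *ᵥ h) := by rw [e2]
      _ = (w ᵥ* Hp) ⬝ᵥ h := Matrix.dotProduct_mulVec _ _ _
      _ = y ⬝ᵥ h := by rw [hwy]
      _ = ∑ j, y j * h j := rfl
  have hny : euclNorm y ^ 2 = ∑ i, w i * s i := by rw [euclNorm_sq, f1]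
  have hdy : (σp - σ) * euclNorm y ≤ euclNorm z := by
    have h1 : ((σp - σ) * euclNorm y) ^ 2 ≤ euclNorm z ^ 2 := by
      rw [mul_pow, euclNorm_sq z, hny]
      exact fmain
    nlinarith [euclNorm_nonneg z, mul_nonneg hδ.le (euclNorm_nonneg y), h1]
  have hfinal : euclNorm z ≤ euclNorm h / (σp - σ) := by
    rw [le_div_iff₀ hδ]
    have hz2 : euclNorm z ^ 2 ≤ euclNorm y * euclNorm h := by
      rw [euclNorm_sq, stepA]
      exact dot_le_norm y h
    rcases eq_or_lt_of_le (euclNorm_nonneg z) with hz0 | hz0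
    · rw [← hz0, zero_mul]
      exact euclNorm_nonneg h
    · nlinarith [mul_le_mul_of_nonneg_right hdy (euclNorm_nonneg h),
        mul_le_mul_of_nonneg_left hz2 hδ.le, hz0]
  constructor
  · rw [hnorm_eq]
    exact hlow
  · rw [hnorm_eq]
    exact hfinal
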